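/- arXiv:1705.10544 — 3 statements merged into one kernel-verified Lean document; each statement's English description precedes it below -/
import Mathlib

section
/- For complex numbers ξ_1,...,ξ_N with 0<|ξ_i|<1 and ξ_i ≠ 1, the antisymmetrized sum ∑_{σ∈S_N} sgn(σ) · [∏_{i=0}^{N-2} ((1-ξ_{2+i})/(1-ξ_{σ(2+i)}))^i] · (ξ_{σ(2)} ξ_{σ(3)}^2 ⋯ ξ_{σ(N)}^{N-1}) / [(1-ξ_{σ(2)}⋯ξ_{σ(N)})(1-ξ_{σ(3)}⋯ξ_{σ(N)})⋯(1-ξ_{σ(N)})] equals (1-ξ_1) · ∏_{1≤i<j≤N} (ξ_j-ξ_i)/(1-ξ_i) · ∏_{i=1}^N 1/(1-ξ_i), for all N ≥ 2. -/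
open Finset Equiv Equiv.Perm Matrix

namespace Stmt0Aux



/-- Vandermonde product of `y`. -/
noncomputable def VdM (n : ℕ) (y : Fin n → ℂ) : ℂ :=
  ∏ i : Fin n, ∏ j ∈ Finset.Ioi i, (y j - y i)

/-- Decomposition of a permutation of `Fin (n+1)` into its value at `0` and a
permutation of `Fin n`, using the order-preserving enumeration `succAbove`. -/
def D (n : ℕ) (p : Fin (n + 1)) (e : Perm (Fin n)) : Perm (Fin (n + 1)) :=
  (Fin.cycleRange p)⁻¹ * Equiv.Perm.decomposeFin.symm (0, e)

lemma D_zero (n : ℕ) (p : Fin (n + 1)) (e : Perm (Fin n)) : D n p e 0 = p := by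
  simp [D, Equiv.Perm.mul_apply, Equiv.Perm.decomposeFin_symm_apply_zero,
    Equiv.Perm.inv_def, Fin.cycleRange_symm_zero]

lemma D_succ (n : ℕ) (p : Fin (n + 1)) (e : Perm (Fin n)) (i : Fin n) :
    D n p e i.succ = p.succAbove (e i) := by
  simp [D, Equiv.Perm.mul_apply, Equiv.Perm.decomposeFin_symm_apply_succ,
    Equiv.Perm.inv_def, Fin.cycleRange_symm_succ]

lemma D_sign (n : ℕ) (p : Fin (n + 1)) (e : Perm (Fin n)) :
    Perm.sign (D n p e) = (-1) ^ (p : ℕ) * Perm.sign e := by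
  simp [D, Fin.sign_cycleRange]

lemma D_bijective (n : ℕ) :
    Function.Bijective (fun pe : Fin (n + 1) × Perm (Fin n) => D n pe.1 pe.2) := by
  rw [Fintype.bijective_iff_injective_and_card]
  constructor
  · rintro ⟨p, e⟩ ⟨p', e'⟩ h
    simp only at h
    have hp : p = p' := by rw [← D_zero n p e, ← D_zero n p' e', h]
    have he : e = e' := by
      ext i
      have := congrArg (fun σ : Perm (Fin (n+1)) => σ i.succ) h
      simp only [D_succ] at this
      rw [hp] at this
      exact congrArg _ (Fin.succAbove_right_injective this)
    simp [hp, he]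
  · simp [Fintype.card_perm, Fintype.card_prod, Nat.factorial_succ]

lemma sum_D (n : ℕ) (f : Perm (Fin (n + 1)) → ℂ) :
    ∑ σ : Perm (Fin (n + 1)), f σ =
      ∑ p : Fin (n + 1), ∑ e : Perm (Fin n), f (D n p e) := by
  rw [← Function.Bijective.sum_comp (D_bijective n) f, Fintype.sum_prod_type]





noncomputable def Bmat (n : ℕ) (y : Fin (n + 1) → ℂ) : Matrix (Fin (n + 1)) (Fin (n + 1)) ℂ :=
  Matrix.of fun i j => y i ^ (j.val + 1)

noncomputable def Amat (n m : ℕ) (y : Fin (n + 1) → ℂ) : Matrix (Fin (n + 1)) (Fin (n + 1)) ℂ :=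
  (Bmat n y).updateCol (Fin.last n) (fun i => (1 - y i) ^ m)

lemma det_updateColumn_sum' {N : ℕ} {α : Type*} (s : Finset α)
    (M : Matrix (Fin N) (Fin N) ℂ) (j : Fin N) (v : α → Fin N → ℂ) :
    (M.updateCol j (fun i => ∑ k ∈ s, v k i)).det
      = ∑ k ∈ s, (M.updateCol j (v k)).det := by
  rw [← Matrix.det_transpose, ← Matrix.updateRow_transpose]
  have h0 : (fun i => ∑ k ∈ s, v k i) = (∑ k ∈ s, v k) := by
    ext i; simp
  rw [Matrix.updateRow, h0]
  have h2 := (Matrix.detRowAlternating (R := ℂ) (n := Fin N)).map_update_sum s j v Mᵀ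
  refine h2.trans ?_
  refine Finset.sum_congr rfl fun k _ => ?_
  have : Function.update Mᵀ j (v k) = Matrix.updateRow Mᵀ j (v k) := rfl
  rw [this, Matrix.updateRow_transpose]
  exact Matrix.det_transpose _



variable {n : ℕ} (y : Fin (n + 1) → ℂ)

lemma det_col_mid {k : ℕ} (hk1 : 1 ≤ k) (hk2 : k ≤ n) :
    ((Bmat n y).updateCol (Fin.last n) (fun i => y i ^ k)).det = 0 := by
  rw [← Matrix.det_transpose]
  refine Matrix.det_zero_of_row_eq (i := ⟨k - 1, by omega⟩) (j := Fin.last n) ?_ ?_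
  · intro h
    have := congrArg Fin.val h
    simp [Fin.last] at this
    omega
  · ext i
    have hne : (⟨k - 1, by omega⟩ : Fin (n + 1)) ≠ Fin.last n := by
      intro h
      have := congrArg Fin.val h
      simp [Fin.last] at this
      omega
    simp only [Matrix.transpose_apply, Matrix.updateCol_apply, if_neg hne, if_pos rfl, Bmat,
      Matrix.of_apply]
    congr 1
    omega

lemma det_col_one :
    ((Bmat n y).updateCol (Fin.last n) (fun _ => 1)).det = (-1) ^ n * VdM (n + 1) y := by
  have hM : (Bmat n y).updateCol (Fin.last n) (fun _ => 1)
      = (Matrix.vandermonde y).submatrix id (Fin.cycleRange (Fin.last n)) := by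
    ext i j
    rcases eq_or_ne j (Fin.last n) with rfl | hj
    · simp [Fin.cycleRange_self, Matrix.vandermonde]
    · have hlt : j < Fin.last n := lt_of_le_of_ne (Fin.le_last j) hj
      simp only [Matrix.updateCol_apply, if_neg hj, Bmat, Matrix.of_apply,
        Matrix.submatrix_apply, id_eq, Matrix.vandermonde_apply]
      rw [Fin.coe_cycleRange_of_lt hlt]
  rw [hM, Matrix.det_permute', Fin.sign_cycleRange, Matrix.det_vandermonde]
  simp [VdM, Fin.val_last]

lemma det_col_top :
    ((Bmat n y).updateCol (Fin.last n) (fun i => y i ^ (n + 1))).det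
      = (∏ i, y i) * VdM (n + 1) y := by
  have hM : (Bmat n y).updateCol (Fin.last n) (fun i => y i ^ (n + 1))
      = Matrix.of fun i j => y i * Matrix.vandermonde y i j := by
    ext i j
    rcases eq_or_ne j (Fin.last n) with rfl | hj
    · simp [Matrix.vandermonde, Fin.val_last, pow_succ, mul_comm]
    · simp only [Matrix.updateCol_apply, if_neg hj, Bmat, Matrix.of_apply,
        Matrix.vandermonde_apply]
      rw [pow_succ, mul_comm]
  rw [hM, Matrix.det_mul_column, Matrix.det_vandermonde]
  rfl

lemma one_sub_pow (x : ℂ) (m : ℕ) :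
    (1 - x) ^ m = ∑ k ∈ Finset.range (m + 1), ((-1) ^ k * (m.choose k : ℂ)) * x ^ k := by
  rw [sub_eq_add_neg, add_comm, add_pow]
  refine Finset.sum_congr rfl fun k _ => ?_
  rw [neg_pow]
  ring

lemma detA (m : ℕ) :
    (Amat n m y).det = ∑ k ∈ Finset.range (m + 1),
      ((-1) ^ k * (m.choose k : ℂ))
        * ((Bmat n y).updateCol (Fin.last n) (fun i => y i ^ k)).det := by
  unfold Amat
  have h : (fun i => (1 - y i) ^ m)
      = fun i => ∑ k ∈ Finset.range (m + 1), (((-1) ^ k * (m.choose k : ℂ)) * y i ^ k) :=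
    funext fun i => one_sub_pow (y i) m
  rw [h, det_updateColumn_sum' (Finset.range (m + 1)) (Bmat n y) (Fin.last n)
    (fun k i => ((-1) ^ k * (m.choose k : ℂ)) * y i ^ k)]
  refine Finset.sum_congr rfl fun k _ => ?_
  have h2 : (fun i => ((-1) ^ k * (m.choose k : ℂ)) * y i ^ k)
      = ((-1) ^ k * (m.choose k : ℂ)) • (fun i => y i ^ k) := by
    ext i; simp
  rw [h2, Matrix.det_updateCol_smul]

lemma detA_n : (Amat n n y).det = (-1) ^ n * VdM (n + 1) y := by
  rw [detA]
  have hsub : ∑ k ∈ Finset.range (n + 1),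
      ((-1) ^ k * (n.choose k : ℂ))
        * ((Bmat n y).updateCol (Fin.last n) (fun i => y i ^ k)).det
      = ∑ k ∈ ({0} : Finset ℕ),
      ((-1) ^ k * (n.choose k : ℂ))
        * ((Bmat n y).updateCol (Fin.last n) (fun i => y i ^ k)).det := by
    refine (Finset.sum_subset ?_ ?_).symm
    · intro k hk
      simp only [Finset.mem_singleton] at hk
      subst hk; simp
    · intro k hk hk2
      simp only [Finset.mem_singleton] at hk2
      rw [det_col_mid y (by omega) (by simp at hk; omega)]
      ring
  rw [hsub, Finset.sum_singleton]
  have e0 : ((Bmat n y).updateCol (Fin.last n) fun i => y i ^ 0)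
      = ((Bmat n y).updateCol (Fin.last n) fun _ => (1 : ℂ)) := by
    simp
  rw [e0, det_col_one]
  simp

lemma detA_n1 : (Amat n (n + 1) y).det = (-1) ^ n * ((1 - ∏ i, y i) * VdM (n + 1) y) := by
  rw [detA]
  have hsub : ∑ k ∈ Finset.range (n + 2),
      ((-1) ^ k * ((n + 1).choose k : ℂ))
        * ((Bmat n y).updateCol (Fin.last n) (fun i => y i ^ k)).det
      = ∑ k ∈ ({0, n + 1} : Finset ℕ),
      ((-1) ^ k * ((n + 1).choose k : ℂ))
        * ((Bmat n y).updateCol (Fin.last n) (fun i => y i ^ k)).det := by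
    refine (Finset.sum_subset ?_ ?_).symm
    · intro k hk
      simp only [Finset.mem_insert, Finset.mem_singleton] at hk
      rcases hk with rfl | rfl <;> simp [Finset.mem_range]
    · intro k hk hk2
      simp only [Finset.mem_insert, Finset.mem_singleton, not_or] at hk2
      rw [det_col_mid y (by omega) (by simp at hk; omega)]
      ring
  rw [hsub, Finset.sum_pair (by omega : (0:ℕ) ≠ n + 1)]
  have e0 : ((Bmat n y).updateCol (Fin.last n) fun i => y i ^ 0)
      = ((Bmat n y).updateCol (Fin.last n) fun _ => (1 : ℂ)) := by
    simp
  rw [e0, det_col_one, det_col_top]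
  simp [Nat.choose_self, Nat.choose_zero_right]
  ring



variable {n : ℕ} (y : Fin (n + 1) → ℂ)

lemma detExpand (m : ℕ) :
    (Amat n m y).det = ∑ p : Fin (n + 1), (-1) ^ (p.val + n) * (1 - y p) ^ m *
      ((∏ i, y (p.succAbove i)) * VdM n (fun i => y (p.succAbove i))) := by
  rw [Matrix.det_succ_column (Amat n m y) (Fin.last n)]
  refine Finset.sum_congr rfl fun p _ => ?_
  have h1 : Amat n m y p (Fin.last n) = (1 - y p) ^ m := by
    simp [Amat, Matrix.updateCol_apply]
  have h2 : (Amat n m y).submatrix p.succAbove (Fin.last n).succAbove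
      = Matrix.of fun i j => y (p.succAbove i) * Matrix.vandermonde (fun i => y (p.succAbove i)) i j := by
    ext i j
    have hcs : (Fin.last n).succAbove j = Fin.castSucc j := by
      rw [Fin.succAbove_last]
    have hne : Fin.castSucc j ≠ Fin.last n := (Fin.castSucc_lt_last j).ne
    simp only [Matrix.submatrix_apply, hcs, Amat, Matrix.updateCol_apply, if_neg hne,
      Bmat, Matrix.of_apply, Matrix.vandermonde_apply, Fin.coe_castSucc]
    rw [pow_succ, mul_comm]
  rw [h1, h2, Matrix.det_mul_column, Matrix.det_vandermonde, Fin.val_last]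
  rfl

lemma neg_one_shift (Z : Fin (n + 1) → ℂ) :
    ∑ p : Fin (n + 1), (-1 : ℂ) ^ (p.val) * Z p
      = (-1) ^ n * ∑ p : Fin (n + 1), (-1) ^ (p.val + n) * Z p := by
  rw [Finset.mul_sum]
  refine Finset.sum_congr rfl fun p _ => ?_
  have hnn : (-1 : ℂ) ^ n * (-1) ^ n = 1 := by rw [← mul_pow]; norm_num
  rw [pow_add]
  linear_combination (-((-1 : ℂ) ^ (p.val) * Z p)) * hnn

lemma detId2 :
    ∑ p : Fin (n + 1), (-1 : ℂ) ^ (p.val) * ((1 - y p) ^ n *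
      ((∏ i, y (p.succAbove i)) * VdM n (fun i => y (p.succAbove i))))
      = VdM (n + 1) y := by
  have h1 := detExpand y n
  rw [detA_n] at h1
  have h2 := neg_one_shift (fun p => (1 - y p) ^ n *
      ((∏ i, y (p.succAbove i)) * VdM n (fun i => y (p.succAbove i))))
  rw [h2]
  have h3 : ∑ p : Fin (n+1), (-1:ℂ) ^ (p.val + n) * ((1 - y p) ^ n *
      ((∏ i, y (p.succAbove i)) * VdM n (fun i => y (p.succAbove i))))
      = (-1) ^ n * VdM (n + 1) y :=
    Eq.trans (Finset.sum_congr rfl fun p _ => by ring) h1.symm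
  rw [h3, ← mul_assoc, ← mul_pow]
  simp

lemma detId1 :
    ∑ p : Fin (n + 1), (-1 : ℂ) ^ (p.val) * ((1 - y p) ^ (n + 1) *
      ((∏ i, y (p.succAbove i)) * VdM n (fun i => y (p.succAbove i))))
      = (1 - ∏ i, y i) * VdM (n + 1) y := by
  have h1 := detExpand y (n + 1)
  rw [detA_n1] at h1
  have h2 := neg_one_shift (fun p => (1 - y p) ^ (n + 1) *
      ((∏ i, y (p.succAbove i)) * VdM n (fun i => y (p.succAbove i))))
  rw [h2]
  have h3 : ∑ p : Fin (n+1), (-1:ℂ) ^ (p.val + n) * ((1 - y p) ^ (n + 1) *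
      ((∏ i, y (p.succAbove i)) * VdM n (fun i => y (p.succAbove i))))
      = (-1) ^ n * ((1 - ∏ i, y i) * VdM (n + 1) y) :=
    Eq.trans (Finset.sum_congr rfl fun p _ => by ring) h1.symm
  rw [h3, ← mul_assoc, ← mul_pow]
  simp






noncomputable def tailP (n : ℕ) (w : Fin n → ℂ) (k : Fin n) : ℂ :=
  ∏ m : Fin n, if k ≤ m then w m else 1

noncomputable def Hterm (n : ℕ) (y : Fin n → ℂ) (σ : Perm (Fin n)) : ℂ :=
  ((Perm.sign σ : ℤ) : ℂ) * (∏ j : Fin n, y (σ j) ^ (j.val + 1) / (1 - y (σ j)) ^ j.val)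
    / ∏ k : Fin n, (1 - tailP n (fun m => y (σ m)) k)

noncomputable def Hsum (n : ℕ) (y : Fin n → ℂ) : ℂ := ∑ σ : Perm (Fin n), Hterm n y σ

lemma tail_succ (n : ℕ) (y : Fin (n + 1) → ℂ) (σ : Perm (Fin (n + 1))) (i : Fin n) :
    tailP (n + 1) (fun m => y (σ m)) i.succ
      = tailP n (fun m => y (σ m.succ)) i := by
  unfold tailP
  rw [Fin.prod_univ_succ]
  have h0 : ¬ (i.succ ≤ (0 : Fin (n + 1))) := by
    simp [Fin.le_def]
  rw [if_neg h0, one_mul]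
  refine Finset.prod_congr rfl fun m _ => ?_
  congr 1
  simp [Fin.succ_le_succ_iff]

lemma prod_abs_lt_one {n : ℕ} (hn : 0 < n) (y : Fin n → ℂ)
    (h : ∀ i, ‖y i‖ < 1) : ‖∏ i, y i‖ < 1 := by
  obtain ⟨n', rfl⟩ : ∃ n', n = n' + 1 := ⟨n - 1, by omega⟩
  rw [norm_prod, Fin.prod_univ_succ]
  have hrest : ∏ i : Fin n', ‖y i.succ‖ ≤ 1 :=
    Finset.prod_le_one (fun i _ => norm_nonneg _) (fun i _ => (h i.succ).le)
  calc ‖y 0‖ * ∏ i : Fin n', ‖y i.succ‖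
      ≤ ‖y 0‖ * 1 :=
        mul_le_mul_of_nonneg_left hrest (norm_nonneg _)
    _ < 1 := by rw [mul_one]; exact h 0

lemma one_sub_ne_zero {x : ℂ} (h : ‖x‖ < 1) : (1 : ℂ) - x ≠ 0 := by
  intro hx
  have : x = 1 := by linear_combination -hx
  rw [this] at h
  simp at h


end Stmt0Aux
section
open Finset Equiv Equiv.Perm Matrix
namespace Stmt0Aux

lemma aux_alg (a Z V T q u : ℂ) (hu : u ≠ 0) (n : ℕ) :
    a * ((Z / T) / q) * ((Z * V) / T ^ n)
      = (1 / (q * (u * T) ^ (n + 1))) * ((a * Z) * (u ^ (n + 1) * (Z * V))) := by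
  rcases eq_or_ne T 0 with rfl | hT
  · simp
  · rcases eq_or_ne q 0 with rfl | hq
    · simp
    · field_simp
      ring

lemma aux_alg2 (Z V T u : ℂ) (hu : u ≠ 0) (n : ℕ) :
    (Z * V) / T ^ n = (1 / (u * T) ^ n) * (u ^ n * (Z * V)) := by
  rcases eq_or_ne T 0 with rfl | hT
  · rcases Nat.eq_zero_or_pos n with rfl | hn
    · simp
    · rw [zero_pow (by omega), mul_zero, zero_pow (by omega)]
      simp
  · field_simp
    ring

lemma Hterm_D (n : ℕ) (y : Fin (n + 1) → ℂ) (p : Fin (n + 1)) (e : Perm (Fin n)) :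
    Hterm (n + 1) y (D n p e)
      = (-1) ^ (p.val) * (y p *
          ((∏ i : Fin n, (y (p.succAbove i) / (1 - y (p.succAbove i)))) / (1 - ∏ i, y i))
          * Hterm n (fun i => y (p.succAbove i)) e) := by
  set z : Fin n → ℂ := fun i => y (p.succAbove i) with hz
  unfold Hterm
  have hs : ((Perm.sign (D n p e) : ℤ) : ℂ)
      = (-1) ^ (p.val) * ((Perm.sign e : ℤ) : ℂ) := by
    rw [D_sign]; push_cast; simp
  have hnum : (∏ j : Fin (n + 1), y (D n p e j) ^ (j.val + 1) / (1 - y (D n p e j)) ^ j.val)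
      = y p * ((∏ i, z i / (1 - z i))
          * ∏ i : Fin n, z (e i) ^ (i.val + 1) / (1 - z (e i)) ^ i.val) := by
    rw [Fin.prod_univ_succ]
    have h0 : y (D n p e 0) ^ ((0 : Fin (n + 1)).val + 1)
        / (1 - y (D n p e 0)) ^ ((0 : Fin (n + 1)).val) = y p := by
      simp [D_zero]
    rw [h0]
    congr 1
    have hrest : ∀ i : Fin n,
        y (D n p e i.succ) ^ ((i.succ : Fin (n + 1)).val + 1)
          / (1 - y (D n p e i.succ)) ^ ((i.succ : Fin (n + 1)).val)
        = (z (e i) / (1 - z (e i))) * (z (e i) ^ (i.val + 1) / (1 - z (e i)) ^ i.val) := by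
      intro i
      rw [D_succ, Fin.val_succ, div_mul_div_comm, ← pow_succ', ← pow_succ']
    rw [Finset.prod_congr rfl (fun i _ => hrest i), Finset.prod_mul_distrib]
    congr 1
    exact Equiv.prod_comp e (fun i => z i / (1 - z i))
  have hden : (∏ k : Fin (n + 1), (1 - tailP (n + 1) (fun m => y (D n p e m)) k))
      = (1 - ∏ i, y i) * ∏ k : Fin n, (1 - tailP n (fun m => z (e m)) k) := by
    rw [Fin.prod_univ_succ]
    congr 1
    · congr 1
      unfold tailP
      rw [Finset.prod_congr rfl (fun m _ => if_pos (Fin.zero_le m))]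
      exact Equiv.prod_comp (D n p e) y
    · refine Finset.prod_congr rfl fun k _ => ?_
      rw [tail_succ]
      congr 1
      refine Finset.prod_congr rfl fun m _ => ?_
      simp [hz, D_succ]
  rw [hs, hnum, hden]
  simp only [div_eq_mul_inv, mul_inv]
  ring

theorem Hval : ∀ (n : ℕ) (y : Fin n → ℂ), (∀ i, ‖y i‖ < 1) →
    Hsum n y = ((∏ i, y i) * VdM n y) / ∏ i, (1 - y i) ^ n := by
  intro n
  induction n with
  | zero =>
    intro y hy
    simp [Hsum, Hterm, VdM]
  | succ n ih =>
    intro y hy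
    have h1y : ∀ i, (1 : ℂ) - y i ≠ 0 := fun i => one_sub_ne_zero (hy i)
    have hP : (1 : ℂ) - ∏ i, y i ≠ 0 :=
      one_sub_ne_zero (prod_abs_lt_one (by omega) y hy)
    have hz : ∀ p : Fin (n + 1), ∀ i : Fin n, ‖y (p.succAbove i)‖ < 1 :=
      fun p i => hy _
    rw [Hsum, sum_D n (Hterm (n + 1) y)]
    have hinner : ∀ p : Fin (n + 1),
        ∑ e : Perm (Fin n), Hterm (n + 1) y (D n p e)
        = (1 / ((1 - ∏ i, y i) * ((∏ i, (1 - y i)) ^ (n + 1))))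
            * ((∏ i, y i) * ((-1) ^ (p.val) * ((1 - y p) ^ (n + 1) *
              ((∏ i, y (p.succAbove i)) * VdM n (fun i => y (p.succAbove i)))))) := by
      intro p
      have he : ∀ e, Hterm (n + 1) y (D n p e)
          = (-1) ^ (p.val) * (y p *
              ((∏ i : Fin n, (y (p.succAbove i) / (1 - y (p.succAbove i)))) / (1 - ∏ i, y i))
              * Hterm n (fun i => y (p.succAbove i)) e) := fun e => Hterm_D n y p e
      rw [Finset.sum_congr rfl (fun e _ => he e), ← Finset.mul_sum, ← Finset.mul_sum]
      have ihz : ∑ σ : Perm (Fin n), Hterm n (fun i => y (p.succAbove i)) σ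
          = ((∏ i : Fin n, y (p.succAbove i)) * VdM n fun i => y (p.succAbove i))
            / ∏ i : Fin n, ((1 : ℂ) - y (p.succAbove i)) ^ n := by
        have h := ih (fun i => y (p.succAbove i)) (hz p)
        unfold Hsum at h
        exact h
      rw [ihz]
      -- now pure algebra
      rw [Finset.prod_div_distrib]
      have hTpow : ∏ i : Fin n, ((1:ℂ) - y (p.succAbove i)) ^ n
          = (∏ i : Fin n, ((1:ℂ) - y (p.succAbove i))) ^ n := by
        rw [Finset.prod_pow]
      rw [hTpow]
      have hyfull : ∏ i : Fin (n + 1), y i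
          = y p * ∏ i : Fin n, y (p.succAbove i) := by
        rw [Fin.prod_univ_succAbove y p]
      have hufull : ∏ i : Fin (n + 1), ((1:ℂ) - y i)
          = (1 - y p) * ∏ i : Fin n, ((1:ℂ) - y (p.succAbove i)) := by
        rw [Fin.prod_univ_succAbove (fun i => (1:ℂ) - y i) p]
      rw [hyfull, hufull]
      have key := aux_alg (y p) (∏ i, y (p.succAbove i)) (VdM n fun i => y (p.succAbove i))
        (∏ i : Fin n, ((1:ℂ) - y (p.succAbove i))) (1 - (y p * ∏ i, y (p.succAbove i)))
        (1 - y p) (h1y p) n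
      linear_combination ((-1 : ℂ) ^ (p.val)) * key
    rw [Finset.sum_congr rfl (fun p _ => hinner p), ← Finset.mul_sum, ← Finset.mul_sum,
      detId1 y]
    have hppow : ∏ i : Fin (n + 1), ((1:ℂ) - y i) ^ (n + 1)
        = (∏ i : Fin (n + 1), ((1:ℂ) - y i)) ^ (n + 1) := by
      rw [Finset.prod_pow]
    rw [hppow]
    have hQ : (∏ i : Fin (n + 1), ((1:ℂ) - y i)) ^ (n + 1) ≠ 0 :=
      pow_ne_zero _ (Finset.prod_ne_zero_iff.mpr fun i _ => h1y i)
    field_simp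

end Stmt0Aux
end
section
open Finset Equiv Equiv.Perm Matrix
namespace Stmt0Aux

lemma pairs_prod {N : ℕ} (f : Fin N → Fin N → ℂ) :
    ∏ p ∈ Finset.univ.filter (fun p : Fin N × Fin N => p.1 < p.2), f p.1 p.2
      = ∏ i : Fin N, ∏ j ∈ Finset.Ioi i, f i j := by
  rw [Finset.prod_sigma']
  refine Finset.prod_nbij' (fun p => ⟨p.1, p.2⟩) (fun x => (x.1, x.2))
    ?_ ?_ ?_ ?_ ?_
  · intro p hp
    simp only [Finset.mem_filter, Finset.mem_univ, true_and] at hp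
    simp [Finset.mem_sigma, Finset.mem_Ioi, hp]
  · intro x hx
    simp only [Finset.mem_sigma, Finset.mem_univ, Finset.mem_Ioi] at hx
    simp [hx]
  · intro a _; rfl
  · intro x _; rfl
  · intro a _; rfl

lemma Fterm_D (n : ℕ) (ξ : Fin (n + 1) → ℂ) (p : Fin (n + 1)) (e : Perm (Fin n)) :
    ((Perm.sign (D n p e) : ℤ) : ℂ) *
        (∏ j : Fin (n + 1), ((1 - ξ j) / (1 - ξ (D n p e j))) ^ (j.val - 1)) *
        ((∏ j : Fin (n + 1), ξ (D n p e j) ^ j.val) /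
          ∏ k : Fin (n + 1), (if k.val = 0 then 1
            else 1 - ∏ m : Fin (n + 1), (if k ≤ m then ξ (D n p e m) else 1)))
      = (∏ j : Fin (n + 1), (1 - ξ j) ^ (j.val - 1)) *
          ((-1) ^ (p.val) * Hterm n (fun i => ξ (p.succAbove i)) e) := by
  set z : Fin n → ℂ := fun i => ξ (p.succAbove i) with hz
  have hs : ((Perm.sign (D n p e) : ℤ) : ℂ)
      = (-1) ^ (p.val) * ((Perm.sign e : ℤ) : ℂ) := by
    rw [D_sign]; push_cast; simp
  have hw : (∏ j : Fin (n + 1), ((1 - ξ j) / (1 - ξ (D n p e j))) ^ (j.val - 1))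
      = (∏ j : Fin (n + 1), (1 - ξ j) ^ (j.val - 1))
          / ∏ i : Fin n, (1 - z (e i)) ^ (i.val) := by
    rw [Finset.prod_congr rfl (fun j _ => div_pow (1 - ξ j) (1 - ξ (D n p e j)) (j.val - 1)),
      Finset.prod_div_distrib]
    congr 1
    rw [Fin.prod_univ_succ]
    have h0 : (1 - ξ (D n p e 0)) ^ ((0 : Fin (n + 1)).val - 1) = 1 := by
      norm_num
    rw [h0, one_mul]
    refine Finset.prod_congr rfl fun i _ => ?_
    rw [D_succ, Fin.val_succ]
    simp [hz]
  have hnum : (∏ j : Fin (n + 1), ξ (D n p e j) ^ j.val)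
      = ∏ i : Fin n, z (e i) ^ (i.val + 1) := by
    rw [Fin.prod_univ_succ]
    have h0 : ξ (D n p e 0) ^ ((0 : Fin (n + 1)).val) = 1 := by norm_num
    rw [h0, one_mul]
    refine Finset.prod_congr rfl fun i _ => ?_
    rw [D_succ, Fin.val_succ]
  have hden : (∏ k : Fin (n + 1), (if k.val = 0 then 1
        else 1 - ∏ m : Fin (n + 1), (if k ≤ m then ξ (D n p e m) else 1)))
      = ∏ k : Fin n, (1 - tailP n (fun m => z (e m)) k) := by
    rw [Fin.prod_univ_succ]
    have h0 : (if ((0 : Fin (n + 1))).val = 0 then (1:ℂ)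
        else 1 - ∏ m : Fin (n + 1), (if 0 ≤ m then ξ (D n p e m) else 1)) = 1 := by
      norm_num
    rw [h0, one_mul]
    refine Finset.prod_congr rfl fun k _ => ?_
    have hk : (k.succ : Fin (n + 1)).val ≠ 0 := by simp [Fin.val_succ]
    rw [if_neg hk]
    have ht : (∏ m : Fin (n + 1), (if k.succ ≤ m then ξ (D n p e m) else 1))
        = tailP (n + 1) (fun m => ξ (D n p e m)) k.succ := rfl
    rw [ht, tail_succ]
    congr 1
    refine Finset.prod_congr rfl fun m _ => ?_
    simp [hz, D_succ]
  rw [hs, hw, hnum, hden]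
  unfold Hterm
  rw [Finset.prod_div_distrib]
  simp only [div_eq_mul_inv, mul_inv]
  ring

end Stmt0Aux
end
section
open Finset Equiv Equiv.Perm
namespace Stmt0Aux

lemma hkey_pow (n : ℕ) (ξ : Fin (n + 1) → ℂ) :
    (∏ j : Fin (n + 1), (1 - ξ j) ^ (j.val - 1))
      * ((∏ i : Fin (n + 1), (1 - ξ i) ^ (n - i.val))
      * (∏ i : Fin (n + 1), (1 - ξ i)))
      = (1 - ξ 0) * (∏ i : Fin (n + 1), (1 - ξ i)) ^ n := by
  have point : ∀ i : Fin (n + 1),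
      (1 - ξ i) ^ (i.val - 1) * ((1 - ξ i) ^ (n - i.val) * (1 - ξ i))
        = (if i.val = 0 then (1 - ξ i) else 1) * (1 - ξ i) ^ n := by
    intro i
    rcases Nat.eq_zero_or_pos i.val with h | h
    · rw [if_pos h, h]
      simp [pow_succ]
      ring
    · rw [if_neg (by omega), one_mul, ← pow_succ, ← pow_add]
      congr 1
      have := i.isLt
      omega
  rw [← Finset.prod_mul_distrib, ← Finset.prod_mul_distrib,
    Finset.prod_congr rfl (fun i _ => point i), Finset.prod_mul_distrib,
    Finset.prod_pow]
  congr 1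
  rw [Fintype.prod_eq_single (0 : Fin (n + 1))]
  · simp
  · intro i hi
    rw [if_neg]
    simp only [ne_eq, Fin.ext_iff, Fin.val_zero] at hi
    exact hi

theorem main (n : ℕ) (ξ : Fin (n + 1) → ℂ)
    (habs : ∀ i, 0 < ‖ξ i‖ ∧ ‖ξ i‖ < 1)
    (hne : ∀ i, ξ i ≠ 1) :
    ∑ σ : Equiv.Perm (Fin (n + 1)),
      ((Equiv.Perm.sign σ : ℤ) : ℂ) *
        (∏ j : Fin (n + 1), ((1 - ξ j) / (1 - ξ (σ j))) ^ (j.val - 1)) *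
        ((∏ j : Fin (n + 1), ξ (σ j) ^ j.val) /
          ∏ k : Fin (n + 1), (if k.val = 0 then 1
            else 1 - ∏ m : Fin (n + 1), (if k ≤ m then ξ (σ m) else 1))) =
      (1 - ξ 0) *
        (∏ p ∈ Finset.univ.filter (fun p : Fin (n + 1) × Fin (n + 1) => p.1 < p.2),
          ((ξ p.2 - ξ p.1) / (1 - ξ p.1))) *
        ∏ i : Fin (n + 1), (1 / (1 - ξ i)) := by
  have hy : ∀ i, ‖ξ i‖ < 1 := fun i => (habs i).2
  have h1y : ∀ i, (1 : ℂ) - ξ i ≠ 0 := fun i => one_sub_ne_zero (hy i)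
  have hU : (∏ i : Fin (n + 1), ((1:ℂ) - ξ i)) ≠ 0 :=
    Finset.prod_ne_zero_iff.mpr fun i _ => h1y i
  -- LHS
  rw [sum_D n]
  have hterm : ∀ p : Fin (n + 1), ∀ e : Perm (Fin n),
      ((Perm.sign (D n p e) : ℤ) : ℂ) *
        (∏ j : Fin (n + 1), ((1 - ξ j) / (1 - ξ (D n p e j))) ^ (j.val - 1)) *
        ((∏ j : Fin (n + 1), ξ (D n p e j) ^ j.val) /
          ∏ k : Fin (n + 1), (if k.val = 0 then 1
            else 1 - ∏ m : Fin (n + 1), (if k ≤ m then ξ (D n p e m) else 1)))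
      = (∏ j : Fin (n + 1), (1 - ξ j) ^ (j.val - 1)) *
          ((-1) ^ (p.val) * Hterm n (fun i => ξ (p.succAbove i)) e) :=
    fun p e => Fterm_D n ξ p e
  rw [Finset.sum_congr rfl (fun p _ => Finset.sum_congr rfl (fun e _ => hterm p e))]
  have hin : ∀ p : Fin (n + 1),
      ∑ e : Perm (Fin n), (∏ j : Fin (n + 1), (1 - ξ j) ^ (j.val - 1)) *
          ((-1) ^ (p.val) * Hterm n (fun i => ξ (p.succAbove i)) e)
      = (∏ j : Fin (n + 1), (1 - ξ j) ^ (j.val - 1)) *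
          ((1 / (∏ i : Fin (n + 1), ((1:ℂ) - ξ i)) ^ n) *
            ((-1) ^ (p.val) * ((1 - ξ p) ^ n *
              ((∏ i, ξ (p.succAbove i)) * VdM n (fun i => ξ (p.succAbove i)))))) := by
    intro p
    rw [← Finset.mul_sum, ← Finset.mul_sum]
    congr 1
    have hsz : ∑ e : Perm (Fin n), Hterm n (fun i => ξ (p.succAbove i)) e
        = ((∏ i : Fin n, ξ (p.succAbove i)) * VdM n fun i => ξ (p.succAbove i))
          / ∏ i : Fin n, ((1 : ℂ) - ξ (p.succAbove i)) ^ n := by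
      have h := Hval n (fun i => ξ (p.succAbove i)) (fun i => hy _)
      unfold Hsum at h
      exact h
    rw [hsz, Finset.prod_pow]
    have hsplit : ∏ i : Fin (n + 1), ((1:ℂ) - ξ i)
        = (1 - ξ p) * ∏ i : Fin n, ((1:ℂ) - ξ (p.succAbove i)) :=
      Fin.prod_univ_succAbove (fun i => (1:ℂ) - ξ i) p
    rw [hsplit]
    have key := aux_alg2 (∏ i, ξ (p.succAbove i)) (VdM n fun i => ξ (p.succAbove i))
      (∏ i : Fin n, ((1:ℂ) - ξ (p.succAbove i))) (1 - ξ p) (h1y p) n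
    linear_combination ((-1 : ℂ) ^ (p.val)) * key
  rw [Finset.sum_congr rfl (fun p _ => hin p), ← Finset.mul_sum, ← Finset.mul_sum,
    detId2 ξ]
  -- RHS
  rw [pairs_prod (fun i j => (ξ j - ξ i) / (1 - ξ i))]
  have hr1 : ∏ i : Fin (n + 1), ∏ j ∈ Finset.Ioi i, ((ξ j - ξ i) / (1 - ξ i))
      = VdM (n + 1) ξ / ∏ i : Fin (n + 1), (1 - ξ i) ^ (n - i.val) := by
    rw [Finset.prod_congr rfl (fun i (_ : i ∈ Finset.univ) => Finset.prod_div_distrib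
      (f := fun j => ξ j - ξ i) (g := fun _ => 1 - ξ i)),
      Finset.prod_div_distrib]
    congr 1
    refine Finset.prod_congr rfl fun i _ => ?_
    rw [Finset.prod_const, Fin.card_Ioi]
    congr 1
  rw [hr1]
  have hr2 : ∏ i : Fin (n + 1), (1 / (1 - ξ i)) = 1 / ∏ i : Fin (n + 1), (1 - ξ i) := by
    rw [Finset.prod_div_distrib]
    simp
  rw [hr2]
  have hDd : (∏ i : Fin (n + 1), ((1:ℂ) - ξ i) ^ (n - i.val)) ≠ 0 :=
    Finset.prod_ne_zero_iff.mpr fun i _ => pow_ne_zero _ (h1y i)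
  have hkey := hkey_pow n ξ
  field_simp
  linear_combination VdM (n + 1) ξ * hkey
end Stmt0Aux
end

theorem stmt0 (N : ℕ) (hN : 2 ≤ N) (ξ : Fin N → ℂ)
    (habs : ∀ i, 0 < ‖ξ i‖ ∧ ‖ξ i‖ < 1)
    (hne : ∀ i, ξ i ≠ 1) :
    ∑ σ : Equiv.Perm (Fin N),
      ((Equiv.Perm.sign σ : ℤ) : ℂ) *
        (∏ j : Fin N, ((1 - ξ j) / (1 - ξ (σ j))) ^ (j.val - 1)) *
        ((∏ j : Fin N, ξ (σ j) ^ j.val) /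
          ∏ k : Fin N, (if k.val = 0 then 1 else 1 - ∏ m : Fin N, (if k ≤ m then ξ (σ m) else 1))) =
      (1 - ξ ⟨0, by omega⟩) *
        (∏ p ∈ Finset.univ.filter (fun p : Fin N × Fin N => p.1 < p.2),
          ((ξ p.2 - ξ p.1) / (1 - ξ p.1))) *
        ∏ i : Fin N, (1 / (1 - ξ i)) := by
  obtain ⟨n, rfl⟩ : ∃ n, N = n + 1 := ⟨N - 1, by omega⟩
  have h := Stmt0Aux.main n ξ habs hne
  convert h using 3
  rfl
end

section
/- For complex numbers ξ_1,...,ξ_N with all relevant denominators nonzero, ∑_{σ∈S_N} sgn(σ) · 1/[(ξ_{σ(1)}-1)^{N-2}(ξ_{σ(2)}-1)^{N-3}⋯(ξ_{σ(N-2)}-1)] · (ξ_{σ(N-2)} ξ_{σ(N-3)}^2 ⋯ ξ_{σ(1)}^{N-2}) / [(ξ_{σ(1)}⋯ξ_{σ(N-1)}-1)(ξ_{σ(1)}⋯ξ_{σ(N-2)}-1)⋯(ξ_{σ(1)}ξ_{σ(2)}-1)(ξ_{σ(1)}-1)] = ∏_{i=1}^N 1/(ξ_i-1)^{N-1} ·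 ∏_{1≤i<j≤N}(ξ_j-ξ_i), for N ≥ 2. -/
open Finset Equiv

noncomputable section

def Vd {n : ℕ} (x : Fin n → ℂ) : ℂ := ∏ i : Fin n, ∏ j ∈ Finset.Ioi i, (x j - x i)

def Fg (t : ℂ) {n : ℕ} (y : Fin n → ℂ) : ℂ :=
  (∏ j : Fin n, y j ^ (n - 2 - j.val)) /
    ((∏ j : Fin n, (y j - 1) ^ (n - 2 - j.val)) *
      ∏ k : Fin n, (if k.val = n - 1 then 1
        else t * (∏ m : Fin n, if m ≤ k then y m else 1) - 1))

def Ag (t : ℂ) {n : ℕ} (x : Fin n → ℂ) : ℂ :=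
  ∑ σ : Equiv.Perm (Fin n), Vd (x ∘ σ) * Fg t (x ∘ σ)

lemma Vd_eq_det {n : ℕ} (x : Fin n → ℂ) : Vd x = (Matrix.vandermonde x).det := by
  rw [Matrix.det_vandermonde]; rfl

lemma Vd_comp_perm {n : ℕ} (x : Fin n → ℂ) (σ : Equiv.Perm (Fin n)) :
    Vd (x ∘ σ) = ((Equiv.Perm.sign σ : ℤ) : ℂ) * Vd x := by
  rw [Vd_eq_det, Vd_eq_det]
  have : Matrix.vandermonde (x ∘ σ) = (Matrix.vandermonde x).submatrix σ id := by
    funext i j; simp [Matrix.vandermonde]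
  rw [this, Matrix.det_permute]

lemma Vd_cons {n : ℕ} (a : ℂ) (z : Fin n → ℂ) :
    Vd (Fin.cons a z) = (∏ m : Fin n, (z m - a)) * Vd z := by
  unfold Vd
  rw [Fin.prod_univ_succ]
  congr 1
  · rw [Fin.prod_Ioi_zero]; simp
  · refine Finset.prod_congr rfl fun i _ => ?_
    rw [Fin.prod_Ioi_succ]; simp

lemma Vd_eq_zero {n : ℕ} {x : Fin n → ℂ} (h : ¬ Function.Injective x) : Vd x = 0 := by
  simp only [Function.Injective, not_forall] at h
  obtain ⟨i, j, hxij, hij⟩ := h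
  rcases lt_or_gt_of_ne hij with hlt | hlt
  · exact Finset.prod_eq_zero (Finset.mem_univ i)
      (Finset.prod_eq_zero (Finset.mem_Ioi.2 hlt) (by rw [hxij, sub_self]))
  · exact Finset.prod_eq_zero (Finset.mem_univ j)
      (Finset.prod_eq_zero (Finset.mem_Ioi.2 hlt) (by rw [hxij, sub_self]))

lemma Vd_ne_zero {n : ℕ} {x : Fin n → ℂ} (h : Function.Injective x) : Vd x ≠ 0 := by
  unfold Vd
  rw [Finset.prod_ne_zero_iff]
  intro i _
  rw [Finset.prod_ne_zero_iff]
  intro j hj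
  have : i < j := Finset.mem_Ioi.1 hj
  exact sub_ne_zero_of_ne (fun hc => absurd (h hc.symm) (ne_of_lt this))
lemma prod_ite_cons_zero {n : ℕ} (a : ℂ) (z : Fin n → ℂ) :
    (∏ m : Fin (n+1), if m ≤ (0 : Fin (n+1)) then (Fin.cons a z : Fin (n+1) → ℂ) m else 1) = a := by
  rw [Fin.prod_univ_succ]
  simp [Fin.le_zero_iff, Fin.succ_ne_zero]

lemma prod_ite_cons_succ {n : ℕ} (a : ℂ) (z : Fin n → ℂ) (k : Fin n) :
    (∏ m : Fin (n+1), if m ≤ k.succ then (Fin.cons a z : Fin (n+1) → ℂ) m else 1)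
      = a * ∏ m : Fin n, (if m ≤ k then z m else 1) := by
  rw [Fin.prod_univ_succ]
  simp [Fin.succ_le_succ_iff, Fin.zero_le]

lemma Fg_cons {n : ℕ} (hn : 1 ≤ n) (t a : ℂ) (z : Fin n → ℂ) :
    Fg t (Fin.cons a z) =
      (a ^ (n-1) / (a-1) ^ (n-1)) * (1 / (t * a - 1)) * Fg (t * a) z := by
  unfold Fg
  have h1 : (∏ j : Fin (n+1), (Fin.cons a z : Fin (n+1) → ℂ) j ^ (n + 1 - 2 - j.val))
      = a ^ (n-1) * ∏ j : Fin n, z j ^ (n - 2 - j.val) := by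
    rw [Fin.prod_univ_succ, Fin.cons_zero]
    have e0 : n + 1 - 2 - ((0 : Fin (n+1)) : ℕ) = n - 1 := by simp
    rw [e0]
    congr 1
    refine Finset.prod_congr rfl fun j _ => ?_
    rw [Fin.cons_succ]
    congr 1
    simp only [Fin.val_succ]
    omega
  have h2 : (∏ j : Fin (n+1), ((Fin.cons a z : Fin (n+1) → ℂ) j - 1) ^ (n + 1 - 2 - j.val))
      = (a-1) ^ (n-1) * ∏ j : Fin n, (z j - 1) ^ (n - 2 - j.val) := by
    rw [Fin.prod_univ_succ, Fin.cons_zero]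
    have e0 : n + 1 - 2 - ((0 : Fin (n+1)) : ℕ) = n - 1 := by simp
    rw [e0]
    congr 1
    refine Finset.prod_congr rfl fun j _ => ?_
    rw [Fin.cons_succ]
    congr 1
    simp only [Fin.val_succ]
    omega
  have h3 : (∏ k : Fin (n+1), (if k.val = n + 1 - 1 then 1
        else t * (∏ m : Fin (n+1), if m ≤ k then (Fin.cons a z : Fin (n+1) → ℂ) m else 1) - 1))
      = (t * a - 1) * ∏ k : Fin n, (if k.val = n - 1 then 1
        else (t * a) * (∏ m : Fin n, if m ≤ k then z m else 1) - 1) := by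
    rw [Fin.prod_univ_succ]
    congr 1
    · have h0 : ((0 : Fin (n+1)).val = n + 1 - 1) = False := by
        simp; omega
      rw [if_neg (by simp; omega), prod_ite_cons_zero]
    · refine Finset.prod_congr rfl fun k _ => ?_
      by_cases hk : k.val = n - 1
      · rw [if_pos (by simp; omega), if_pos hk]
      · rw [if_neg (by simp; omega), if_neg hk, prod_ite_cons_succ]
        ring
  rw [h1, h2, h3]
  simp only [div_eq_mul_inv, mul_inv]
  ring
lemma comp_decompose {n : ℕ} (x : Fin (n+1) → ℂ) (p : Fin (n+1)) (e : Equiv.Perm (Fin n)) :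
    x ∘ (Equiv.Perm.decomposeFin.symm (p, e)) =
      Fin.cons (x p) ((fun m => x (Equiv.swap 0 p m.succ)) ∘ e) := by
  funext m
  refine Fin.cases ?_ (fun i => ?_) m
  · simp [Equiv.Perm.decomposeFin_symm_apply_zero]
  · simp [Equiv.Perm.decomposeFin_symm_apply_succ]

lemma image_swap_succ {n : ℕ} (p : Fin (n+1)) :
    Finset.image (fun m : Fin n => Equiv.swap 0 p m.succ) Finset.univ
      = Finset.univ.erase p := by
  ext j
  simp only [Finset.mem_image, Finset.mem_erase, Finset.mem_univ, and_true]
  constructor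
  · rintro ⟨m, -, rfl⟩
    intro hc
    have h2 := congrArg (Equiv.swap 0 p) hc
    rw [Equiv.swap_apply_self, Equiv.swap_apply_right] at h2
    exact Fin.succ_ne_zero m h2
  · intro hj
    have hs : Equiv.swap 0 p j ≠ 0 := by
      intro hc
      apply hj
      have := congrArg (Equiv.swap 0 p) hc
      rwa [Equiv.swap_apply_self, Equiv.swap_apply_left] at this
    refine ⟨(Equiv.swap 0 p j).pred hs, by simp, ?_⟩
    rw [Fin.succ_pred, Equiv.swap_apply_self]

lemma swap_succ_injective {n : ℕ} (p : Fin (n+1)) :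
    Function.Injective (fun m : Fin n => Equiv.swap 0 p m.succ) := by
  intro a b hab
  simpa using Fin.succ_injective _ ((Equiv.swap 0 p).injective hab)

lemma prod_erase_eq {n : ℕ} (p : Fin (n+1)) (g : Fin (n+1) → ℂ) :
    ∏ j ∈ Finset.univ.erase p, g j = ∏ m : Fin n, g (Equiv.swap 0 p m.succ) := by
  rw [← image_swap_succ p, Finset.prod_image]
  intro a _ b _ hab
  exact swap_succ_injective p hab

lemma prod_univ_split {n : ℕ} (p : Fin (n+1)) (g : Fin (n+1) → ℂ) :
    ∏ j : Fin (n+1), g j = g p * ∏ m : Fin n, g (Equiv.swap 0 p m.succ) := by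
  rw [← prod_erase_eq, Finset.mul_prod_erase _ _ (Finset.mem_univ p)]
lemma Lsum {ι : Type*} [DecidableEq ι] (t : ℂ) (s : Finset ι) : ∀ (x : ι → ℂ),
    s.Nonempty → Set.InjOn x s →
    (∀ i ∈ s, x i ≠ 1) → (∀ i ∈ s, t * x i ≠ 1) →
    (∀ i ∈ s, ∀ j ∈ s, i ≠ j → t * (x i * x j) ≠ 1) →
    ∑ i ∈ s, (x i ^ (s.card - 1) * ∏ j ∈ s.erase i,
       ((x j - 1) * (t * x j - 1) / ((x j - x i) * (t * (x i * x j) - 1)))) = 1 := by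
  induction s using Finset.strongInduction with
  | _ s IH =>
  intro x hne hinj h1 ht hpair
  by_cases hcard : s.card = 1
  · obtain ⟨a, rfl⟩ := Finset.card_eq_one.1 hcard
    simp
  have hc2 : 2 ≤ s.card := by
    have := hne.card_pos; omega
  by_cases hz : ∃ i0 ∈ s, x i0 = 0
  · -- a zero value present
    obtain ⟨i0, hi0s, hx0⟩ := hz
    rw [← Finset.add_sum_erase _ _ hi0s, hx0, zero_pow (by omega), zero_mul, zero_add]
    have hrw : ∀ i ∈ s.erase i0,
        (x i ^ (s.card - 1) * ∏ j ∈ s.erase i,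
          ((x j - 1) * (t * x j - 1) / ((x j - x i) * (t * (x i * x j) - 1))))
        = x i ^ ((s.erase i0).card - 1) * ∏ j ∈ (s.erase i0).erase i,
          ((x j - 1) * (t * x j - 1) / ((x j - x i) * (t * (x i * x j) - 1))) := by
      intro i hi
      obtain ⟨hii0, his⟩ := Finset.mem_erase.1 hi
      have hxi : x i ≠ 0 := by
        intro hc
        exact hii0 (hinj his hi0s (by rw [hc, hx0]))
      have hmem : i0 ∈ s.erase i := Finset.mem_erase.2 ⟨fun h => hii0 h.symm, hi0s⟩
      rw [← Finset.mul_prod_erase _ _ hmem, hx0, Finset.erase_right_comm]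
      have hg : (0 - 1) * (t * 0 - 1) / ((0 - x i) * (t * (x i * 0) - 1)) = 1 / x i := by
        rw [show (0 - 1 : ℂ) * (t * 0 - 1) = 1 by ring,
            show ((0:ℂ) - x i) * (t * (x i * 0) - 1) = x i by ring]
      rw [hg, Finset.card_erase_of_mem hi0s]
      have hpow : x i ^ (s.card - 1) * (1 / x i) = x i ^ (s.card - 1 - 1) := by
        have : s.card - 1 = (s.card - 1 - 1) + 1 := by omega
        rw [this, pow_succ]
        field_simp
        rw [Nat.add_sub_cancel]
      rw [← mul_assoc, hpow]
    rw [Finset.sum_congr rfl hrw]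
    exact IH (s.erase i0) (Finset.erase_ssubset hi0s) x
      (Finset.card_pos.1 (by rw [Finset.card_erase_of_mem hi0s]; omega))
      (hinj.mono (Finset.coe_subset.2 (Finset.erase_subset _ _)))
      (fun i hi => h1 i (Finset.mem_of_mem_erase hi))
      (fun i hi => ht i (Finset.mem_of_mem_erase hi))
      (fun i hi j hj hij => hpair i (Finset.mem_of_mem_erase hi) j (Finset.mem_of_mem_erase hj) hij)
  · -- no zero value: Lagrange interpolation
    push_neg at hz
    set w : ι → ℂ := fun i => t * x i + (x i)⁻¹ with hw
    have key : ∀ i ∈ s, ∀ j ∈ s, i ≠ j → w i ≠ w j := by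
      intro i hi j hj hij hc
      have hxi := hz i hi
      have hxj := hz j hj
      have hexp : (x i - x j) * (t * (x i * x j) - 1) = x i * x j * (w i - w j) := by
        simp only [hw]
        field_simp
        ring
      rw [hc, sub_self, mul_zero] at hexp
      rcases mul_eq_zero.1 hexp with h | h
      · exact hij (hinj hi hj (by linear_combination h))
      · exact hpair i hi j hj hij (by linear_combination h)
    have hwinj : Set.InjOn w s := fun i hi j hj hww => by
      by_contra hij
      exact key i hi j hj hij hww
    have hsum := Lagrange.sum_basis hwinj hne
    have heval := congrArg (Polynomial.eval (t + 1)) hsum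
    rw [Polynomial.eval_finset_sum, Polynomial.eval_one] at heval
    refine Eq.trans (Finset.sum_congr rfl fun i hi => ?_) heval
    rw [Lagrange.basis, Polynomial.eval_prod]
    have hcc : s.card - 1 = (s.erase i).card := (Finset.card_erase_of_mem hi).symm
    rw [hcc, ← Finset.prod_const, ← Finset.prod_mul_distrib]
    refine Finset.prod_congr rfl fun j hj => ?_
    obtain ⟨hji, hjs⟩ := Finset.mem_erase.1 hj
    have hxi := hz i hi
    have hxj := hz j hjs
    have hxij : x j - x i ≠ 0 := sub_ne_zero_of_ne (fun hc => hji (hinj hjs hi hc))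
    have hpij : t * (x i * x j) - 1 ≠ 0 := sub_ne_zero_of_ne (hpair i hi j hjs (fun h => hji h.symm))
    have hwij : w i - w j ≠ 0 := sub_ne_zero_of_ne (key i hi j hjs (fun h => hji h.symm))
    rw [Lagrange.basisDivisor]
    simp only [Polynomial.eval_mul, Polynomial.eval_C, Polynomial.eval_sub, Polynomial.eval_X]
    have hxij' : x i - x j ≠ 0 := fun hc => hxij (by linear_combination -hc)
    have hD : w i - w j = ((x i - x j) * (t * (x i * x j) - 1)) / (x i * x j) := by
      simp only [hw]
      field_simp
      ring
    have h5 : (w i - w j)⁻¹ = (x i * x j) / ((x i - x j) * (t * (x i * x j) - 1)) := by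
      rw [hD, inv_div]
    have h6 : t + 1 - w j = -((x j - 1) * (t * x j - 1)) / x j := by
      simp only [hw]
      field_simp
      ring
    rw [h5, h6]
    field_simp
    ring
lemma hsingle {n : ℕ} (hn : 2 ≤ n) (t : ℂ) (x : Fin n → ℂ)
    (hB : ∀ (σ : Equiv.Perm (Fin n)) (k : Fin n), k.val ≠ n - 1 →
      t * (∏ m : Fin n, if m ≤ k then x (σ m) else 1) ≠ 1) (i : Fin n) : t * x i ≠ 1 := by
  have h0 : (0:ℕ) < n := by omega
  set k : Fin n := ⟨0, h0⟩ with hk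
  have hle : ∀ m : Fin n, (m ≤ k) = (m = k) := by
    intro m
    have : (m ≤ k) ↔ (m = k) := by
      rw [Fin.le_def, Fin.ext_iff]
      simp [hk]
    exact propext this
  have hp : (∏ m : Fin n, if m ≤ k then x ((Equiv.swap k i) m) else 1) = x i := by
    simp_rw [hle]
    rw [Finset.prod_ite_eq' Finset.univ k (fun m => x (Equiv.swap k i m))]
    simp [Equiv.swap_apply_left]
  intro hc
  exact hB (Equiv.swap k i) k (by simp [hk]; omega) (by rw [hp]; exact hc)

lemma hpairs {n : ℕ} (hn : 3 ≤ n) (t : ℂ) (x : Fin n → ℂ)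
    (hB : ∀ (σ : Equiv.Perm (Fin n)) (k : Fin n), k.val ≠ n - 1 →
      t * (∏ m : Fin n, if m ≤ k then x (σ m) else 1) ≠ 1)
    (i j : Fin n) (hij : i ≠ j) : t * (x i * x j) ≠ 1 := by
  have h0 : (0:ℕ) < n := by omega
  have h1 : (1:ℕ) < n := by omega
  set k0 : Fin n := ⟨0, h0⟩ with hk0
  set k1 : Fin n := ⟨1, h1⟩ with hk1
  set σ1 := Equiv.swap k0 i with hσ1
  set j' := σ1 j with hj'
  have hσ1j' : σ1 j' = j := by rw [hj', hσ1, Equiv.swap_apply_self]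
  have hj'k0 : j' ≠ k0 := by
    intro hc
    apply hij
    have := congrArg σ1 hc
    rw [hσ1j'] at this
    rw [this, hσ1, Equiv.swap_apply_left]
  have hk01 : k0 ≠ k1 := by simp [hk0, hk1, Fin.ext_iff]
  set σ := σ1 * Equiv.swap k1 j' with hσ
  have hσ0 : σ k0 = i := by
    rw [hσ, Equiv.Perm.mul_apply, Equiv.swap_apply_of_ne_of_ne hk01 (fun hc => hj'k0 hc.symm), hσ1, Equiv.swap_apply_left]
  have hσ1' : σ k1 = j := by
    rw [hσ, Equiv.Perm.mul_apply, Equiv.swap_apply_left, hσ1j']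
  have hfilter : Finset.univ.filter (· ≤ k1) = ({k0, k1} : Finset (Fin n)) := by
    ext m
    simp [Fin.le_def, Fin.ext_iff, hk0, hk1]
    omega
  have hp : (∏ m : Fin n, if m ≤ k1 then x (σ m) else 1) = x i * x j := by
    rw [← Finset.prod_filter, hfilter, Finset.prod_insert (by simp [hk0, hk1, Fin.ext_iff]),
      Finset.prod_singleton, hσ0, hσ1']
  intro hc
  exact hB σ k1 (by simp [hk1]; omega) (by rw [hp]; exact hc)
def yv {n : ℕ} (x : Fin (n+1) → ℂ) (p : Fin (n+1)) : Fin n → ℂ :=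
  fun m => x (Equiv.swap 0 p m.succ)

lemma comp_decompose' {n : ℕ} (x : Fin (n+1) → ℂ) (p : Fin (n+1)) (e : Equiv.Perm (Fin n)) :
    x ∘ (Equiv.Perm.decomposeFin.symm (p, e)) = Fin.cons (x p) ((yv x p) ∘ e) :=
  comp_decompose x p e

lemma swap_succ_ne {n : ℕ} (p : Fin (n+1)) (m : Fin n) : Equiv.swap 0 p m.succ ≠ p := by
  intro hc
  have h2 := congrArg (Equiv.swap 0 p) hc
  rw [Equiv.swap_apply_self, Equiv.swap_apply_right] at h2
  exact Fin.succ_ne_zero m h2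

set_option maxHeartbeats 2000000 in
lemma Ag_closed (n : ℕ) (hn : 2 ≤ n) : ∀ (t : ℂ) (x : Fin n → ℂ),
    (∀ i, x i ≠ 1) →
    (∀ (σ : Equiv.Perm (Fin n)) (k : Fin n), k.val ≠ n - 1 →
      t * (∏ m : Fin n, if m ≤ k then x (σ m) else 1) ≠ 1) →
    Ag t x = t * Vd x ^ 2 / ∏ i, ((x i - 1) ^ (n - 2) * (t * x i - 1)) := by
  induction n, hn using Nat.le_induction with
  | base =>
    intro t x h1 hB
    have hs0 := sub_ne_zero_of_ne (hsingle (le_refl 2) t x hB 0)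
    have hs1 := sub_ne_zero_of_ne (hsingle (le_refl 2) t x hB 1)
    have huniv : (Finset.univ : Finset (Equiv.Perm (Fin 2))) = {1, Equiv.swap 0 1} := by decide
    have hIoi0 : Finset.Ioi (0 : Fin 2) = {1} := by decide
    have hIoi1 : Finset.Ioi (1 : Fin 2) = ∅ := by decide
    rw [Ag, huniv, Finset.sum_insert (by decide), Finset.sum_singleton]
    simp only [Vd, Fg, Fin.prod_univ_two, hIoi0, hIoi1, Finset.prod_singleton, Finset.prod_empty,
      Function.comp_apply, Equiv.Perm.coe_one, id_eq, Equiv.swap_apply_left, Equiv.swap_apply_right]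
    norm_num
    have hs0' : x 0 * t - 1 ≠ 0 := by rwa [mul_comm]
    have hs1' : x 1 * t - 1 ≠ 0 := by rwa [mul_comm]
    field_simp
    ring
  | succ n hn IH =>
    intro t x h1 hB
    have hn1 : 1 ≤ n := by omega
    have hsing : ∀ i, t * x i ≠ 1 := hsingle (by omega) t x hB
    have hpair : ∀ i j, i ≠ j → t * (x i * x j) ≠ 1 := fun i j hij => hpairs (by omega) t x hB i j hij
    have hBy : ∀ p : Fin (n+1), ∀ (τ : Equiv.Perm (Fin n)) (k : Fin n), k.val ≠ n - 1 →
        (t * x p) * (∏ m : Fin n, if m ≤ k then (yv x p) (τ m) else 1) ≠ 1 := by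
      intro p τ k hk
      have hkk : (k.succ : Fin (n+1)).val ≠ (n+1) - 1 := by
        simp only [Fin.val_succ]
        omega
      have hmain := hB (Equiv.Perm.decomposeFin.symm (p, τ)) k.succ hkk
      have hprodeq : (∏ m : Fin (n+1), if m ≤ k.succ then x ((Equiv.Perm.decomposeFin.symm (p, τ)) m) else 1)
          = x p * ∏ m : Fin n, (if m ≤ k then (yv x p) (τ m) else 1) := by
        have hc : ∀ m, x ((Equiv.Perm.decomposeFin.symm (p, τ)) m)
            = (Fin.cons (x p) ((yv x p) ∘ τ) : Fin (n+1) → ℂ) m :=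
          fun m => congrFun (comp_decompose' x p τ) m
        simp_rw [hc]
        exact prod_ite_cons_succ (x p) ((yv x p) ∘ τ) k
      rw [hprodeq] at hmain
      intro hc
      apply hmain
      linear_combination hc
    have hexpand : Ag t x = ∑ p : Fin (n+1),
        ((∏ m : Fin n, ((yv x p) m - x p)) * (x p ^ (n-1) / (x p - 1) ^ (n-1)) * (1 / (t * x p - 1))) *
          Ag (t * x p) (yv x p) := by
      rw [Ag, ← Equiv.sum_comp (Equiv.Perm.decomposeFin.symm)
        (fun σ : Equiv.Perm (Fin (n+1)) => Vd (x ∘ σ) * Fg t (x ∘ σ)), Fintype.sum_prod_type]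
      refine Finset.sum_congr rfl fun p _ => ?_
      rw [Ag, Finset.mul_sum]
      refine Finset.sum_congr rfl fun e _ => ?_
      rw [comp_decompose' x p e, Vd_cons, Fg_cons hn1]
      have hpe : (∏ m : Fin n, (((yv x p) ∘ ⇑e) m - x p)) = ∏ m : Fin n, ((yv x p) m - x p) := by
        simp only [Function.comp_apply]
        exact Equiv.prod_comp e (fun m => (yv x p) m - x p)
      rw [hpe]
      ring
    have hIH : ∀ p, Ag (t * x p) (yv x p) = (t * x p) * Vd (yv x p) ^ 2 /
        ∏ m, (((yv x p) m - 1) ^ (n-2) * ((t * x p) * (yv x p) m - 1)) :=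
      fun p => IH (t * x p) (yv x p) (fun m => h1 _) (hBy p)
    have hsq : ∀ p, (∏ m : Fin n, ((yv x p) m - x p)) ^ 2 * Vd (yv x p) ^ 2 = Vd x ^ 2 := by
      intro p
      have hc : x ∘ (Equiv.Perm.decomposeFin.symm (p, 1)) = Fin.cons (x p) (yv x p) := by
        rw [comp_decompose' x p 1]
        rfl
      have h2 := Vd_comp_perm x (Equiv.Perm.decomposeFin.symm (p, 1))
      rw [hc] at h2
      have h3 : Vd (Fin.cons (x p) (yv x p)) ^ 2 = Vd x ^ 2 := by
        rw [h2]
        rcases Int.units_eq_one_or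
          (Equiv.Perm.sign (Equiv.Perm.decomposeFin.symm (p, (1 : Equiv.Perm (Fin n))))) with h | h <;>
          rw [h] <;> push_cast <;> ring
      rw [← h3, Vd_cons]
      ring
    rw [hexpand, Finset.sum_congr rfl (fun p _ => by rw [hIH p])]
    have hexp2 : n + 1 - 2 = n - 1 := by omega
    simp only [hexp2]
    by_cases hinj : Function.Injective x
    · -- injective case
      have hVne : Vd x ≠ 0 := Vd_ne_zero hinj
      have hyne : ∀ p m, (yv x p) m - x p ≠ 0 :=
        fun p m => sub_ne_zero_of_ne (fun hc => (swap_succ_ne p m) (hinj hc))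
      have hA1ne : ∀ p, (∏ m : Fin n, ((yv x p) m - x p)) ≠ 0 :=
        fun p => Finset.prod_ne_zero_iff.2 (fun m _ => hyne p m)
      have hL := Lsum t (Finset.univ : Finset (Fin (n+1))) x ⟨0, Finset.mem_univ 0⟩ hinj.injOn
        (fun i _ => h1 i) (fun i _ => hsing i) (fun i _ j _ hij => hpair i j hij)
      rw [Finset.card_univ, Fintype.card_fin] at hL
      have hLp : ∀ p : Fin (n+1), (∏ j ∈ Finset.univ.erase p,
          ((x j - 1) * (t * x j - 1) / ((x j - x p) * (t * (x p * x j) - 1))))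
          = ∏ m : Fin n, (((yv x p) m - 1) * (t * (yv x p) m - 1) /
              (((yv x p) m - x p) * (t * (x p * (yv x p) m) - 1))) :=
        fun p => prod_erase_eq p _
      simp_rw [hLp] at hL
      have hcast : n + 1 - 1 = n := by omega
      rw [hcast] at hL
      calc ∑ p : Fin (n+1), ((∏ m : Fin n, ((yv x p) m - x p)) * (x p ^ (n-1) / (x p - 1) ^ (n-1)) * (1 / (t * x p - 1))) *
            ((t * x p) * Vd (yv x p) ^ 2 / ∏ m, (((yv x p) m - 1) ^ (n-2) * ((t * x p) * (yv x p) m - 1)))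
          = ∑ p : Fin (n+1), (t * Vd x ^ 2 / ∏ i, ((x i - 1) ^ (n - 1) * (t * x i - 1))) *
            (x p ^ n * ∏ m : Fin n, (((yv x p) m - 1) * (t * (yv x p) m - 1) /
              (((yv x p) m - x p) * (t * (x p * (yv x p) m) - 1)))) := by
            refine Finset.sum_congr rfl fun p _ => ?_
            have hA1ne' := hA1ne p
            have hA2ne : (∏ m : Fin n, ((yv x p) m - 1) ^ (n-2)) ≠ 0 :=
              Finset.prod_ne_zero_iff.2 (fun m _ => pow_ne_zero _ (sub_ne_zero_of_ne (h1 _)))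
            have hA6ne : (∏ m : Fin n, ((yv x p) m - 1)) ≠ 0 :=
              Finset.prod_ne_zero_iff.2 (fun m _ => sub_ne_zero_of_ne (h1 _))
            have hA5ne : (∏ m : Fin n, (t * (yv x p) m - 1)) ≠ 0 :=
              Finset.prod_ne_zero_iff.2 (fun m _ => sub_ne_zero_of_ne (hsing _))
            have hA3ne : (∏ m : Fin n, ((t * x p) * (yv x p) m - 1)) ≠ 0 := by
              refine Finset.prod_ne_zero_iff.2 (fun m _ => ?_)
              have hq : t * (x p * (yv x p) m) ≠ 1 :=
                hpair p _ (fun hc => swap_succ_ne p m hc.symm)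
              intro hc
              apply hq
              linear_combination hc
            have hxp1 : (x p - 1) ^ (n-1) ≠ 0 := pow_ne_zero _ (sub_ne_zero_of_ne (h1 p))
            have htp : t * x p - 1 ≠ 0 := sub_ne_zero_of_ne (hsing p)
            have hD : (∏ m : Fin n, (((yv x p) m - 1) ^ (n-2) * ((t * x p) * (yv x p) m - 1)))
                = (∏ m : Fin n, ((yv x p) m - 1) ^ (n-2)) * (∏ m : Fin n, ((t * x p) * (yv x p) m - 1)) :=
              Finset.prod_mul_distrib
            have hA3' : (∏ m : Fin n, (t * (x p * (yv x p) m) - 1))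
                = ∏ m : Fin n, ((t * x p) * (yv x p) m - 1) :=
              Finset.prod_congr rfl fun m _ => by ring_nf
            have hLf : (∏ m : Fin n, (((yv x p) m - 1) * (t * (yv x p) m - 1) /
                (((yv x p) m - x p) * (t * (x p * (yv x p) m) - 1))))
                = ((∏ m : Fin n, ((yv x p) m - 1)) * (∏ m : Fin n, (t * (yv x p) m - 1))) /
                  ((∏ m : Fin n, ((yv x p) m - x p)) * (∏ m : Fin n, ((t * x p) * (yv x p) m - 1))) := by
              rw [Finset.prod_div_distrib, Finset.prod_mul_distrib, Finset.prod_mul_distrib, hA3']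
            have hsplitP : (∏ i : Fin (n+1), ((x i - 1) ^ (n-1) * (t * x i - 1)))
                = ((x p - 1) ^ (n-1) * (t * x p - 1)) *
                  ∏ m : Fin n, (((yv x p) m - 1) ^ (n-1) * (t * (yv x p) m - 1)) :=
              prod_univ_split p (fun i => (x i - 1) ^ (n-1) * (t * x i - 1))
            have hA4 : (∏ m : Fin n, (((yv x p) m - 1) ^ (n-1) * (t * (yv x p) m - 1)))
                = ((∏ m : Fin n, ((yv x p) m - 1) ^ (n-2)) * (∏ m : Fin n, ((yv x p) m - 1))) *
                  (∏ m : Fin n, (t * (yv x p) m - 1)) := by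
              rw [Finset.prod_mul_distrib]
              congr 1
              rw [← Finset.prod_mul_distrib]
              refine Finset.prod_congr rfl fun m _ => ?_
              rw [← pow_succ]
              congr 1
              omega
            have hVy : Vd (yv x p) ^ 2 = Vd x ^ 2 / (∏ m : Fin n, ((yv x p) m - x p)) ^ 2 := by
              rw [eq_div_iff (pow_ne_zero 2 hA1ne'), mul_comm]
              exact hsq p
            have hxp : x p ^ n = x p ^ (n-1) * x p := by
              rw [← pow_succ]
              congr 1
              omega
            rw [hD, hLf, hsplitP, hA4, hVy, hxp]
            set V := Vd x with hVs
            set T1 := t * x p - 1 with hT1s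
            set A1 := ∏ m : Fin n, (yv x p m - x p) with hA1s
            set A2 := ∏ m : Fin n, (yv x p m - 1) ^ (n - 2) with hA2s
            set A3 := ∏ m : Fin n, (t * x p * yv x p m - 1) with hA3s
            set A5 := ∏ m : Fin n, (t * yv x p m - 1) with hA5s
            set A6 := ∏ m : Fin n, (yv x p m - 1) with hA6s
            set X0 := x p ^ (n - 1) with hX0s
            set X1 := (x p - 1) ^ (n - 1) with hX1s
            clear_value V T1 A1 A2 A3 A5 A6 X0 X1
            have c1 : A1 * (A1^2)⁻¹ = A1⁻¹ := by
              rw [sq, mul_inv, ← mul_assoc, mul_inv_cancel₀ hA1ne', one_mul]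
            have c2 : A6 * A6⁻¹ = 1 := mul_inv_cancel₀ hA6ne
            have c3 : A5 * A5⁻¹ = 1 := mul_inv_cancel₀ hA5ne
            trans (A1 * (A1^2)⁻¹) * (X0 * x p * t * V^2 * X1⁻¹ * T1⁻¹ * A2⁻¹ * A3⁻¹)
            · simp only [div_eq_mul_inv, mul_inv, one_mul]
              ring
            rw [c1]
            trans (A6 * A6⁻¹) * ((A5 * A5⁻¹) *
              (A1⁻¹ * (X0 * x p * t * V^2 * X1⁻¹ * T1⁻¹ * A2⁻¹ * A3⁻¹)))
            · rw [c2, c3]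
              ring
            simp only [div_eq_mul_inv, mul_inv, one_mul]
            ring
          _ = t * Vd x ^ 2 / ∏ i, ((x i - 1) ^ (n - 1) * (t * x i - 1)) := by
            rw [← Finset.mul_sum, hL, mul_one]
    · -- non-injective case
      have hV0 : Vd x = 0 := Vd_eq_zero hinj
      rw [hV0]
      norm_num
      refine Finset.sum_eq_zero fun p _ => ?_
      by_cases hA1 : (∏ m : Fin n, ((yv x p) m - x p)) = 0
      · rw [hA1]
        ring
      · have hVy : Vd (yv x p) ^ 2 = 0 := by
          have h4 := hsq p
          rw [hV0] at h4
          norm_num at h4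
          rcases h4 with h4 | h4
          · exact absurd h4 hA1
          · rw [h4]; ring
        rw [hVy]
        simp
lemma pairs_prod {n : ℕ} (x : Fin n → ℂ) :
    ∏ p ∈ Finset.univ.filter (fun p : Fin n × Fin n => p.1 < p.2), (x p.2 - x p.1) = Vd x := by
  rw [Vd, Finset.prod_filter, ← Finset.univ_product_univ, Finset.prod_product]
  refine Finset.prod_congr rfl fun i _ => ?_
  rw [← Finset.prod_filter]
  congr 1
  ext j
  simp [Finset.mem_Ioi, Finset.mem_filter]

theorem stmt2 (N : ℕ) (hN : 2 ≤ N) (ξ : Fin N → ℂ)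
    (hne : ∀ i, ξ i ≠ 1)
    (hprod : ∀ (σ : Equiv.Perm (Fin N)) (k : Fin N), k.val ≠ N - 1 →
      (∏ m : Fin N, if m ≤ k then ξ (σ m) else 1) ≠ 1) :
    ∑ σ : Equiv.Perm (Fin N),
      ((Equiv.Perm.sign σ : ℤ) : ℂ) *
        ((∏ j : Fin N, ξ (σ j) ^ (N - 2 - j.val)) /
          ((∏ j : Fin N, (ξ (σ j) - 1) ^ (N - 2 - j.val)) *
            ∏ k : Fin N, (if k.val = N - 1 then 1
              else (∏ m : Fin N, (if m ≤ k then ξ (σ m) else 1)) - 1))) =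
      (∏ i : Fin N, (1 / (ξ i - 1) ^ (N - 1))) *
        ∏ p ∈ Finset.univ.filter (fun p : Fin N × Fin N => p.1 < p.2), (ξ p.2 - ξ p.1) := by
  classical
  have hFg : ∀ σ : Equiv.Perm (Fin N),
      ((∏ j : Fin N, ξ (σ j) ^ (N - 2 - j.val)) /
          ((∏ j : Fin N, (ξ (σ j) - 1) ^ (N - 2 - j.val)) *
            ∏ k : Fin N, (if k.val = N - 1 then 1
              else (∏ m : Fin N, (if m ≤ k then ξ (σ m) else 1)) - 1)))
        = Fg 1 (ξ ∘ σ) := by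
    intro σ
    simp only [Fg, Function.comp_apply, one_mul]
  simp_rw [hFg, pairs_prod]
  by_cases hinj : Function.Injective ξ
  · have hVne := Vd_ne_zero hinj
    have hAg := Ag_closed N hN 1 ξ hne (by
      intro σ k hk
      rw [one_mul]
      exact hprod σ k hk)
    have h2 : ∀ σ : Equiv.Perm (Fin N),
        ((Equiv.Perm.sign σ : ℤ) : ℂ) * Fg 1 (ξ ∘ σ) = (Vd (ξ ∘ σ) * Fg 1 (ξ ∘ σ)) / Vd ξ := by
      intro σ
      rw [Vd_comp_perm]
      field_simp
    simp_rw [h2]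
    rw [← Finset.sum_div, ← Ag, hAg]
    have hP : (∏ i : Fin N, ((ξ i - 1) ^ (N - 2) * (1 * ξ i - 1)))
        = ∏ i : Fin N, (ξ i - 1) ^ (N - 1) := by
      refine Finset.prod_congr rfl fun i _ => ?_
      rw [one_mul, ← pow_succ]
      congr 1
      omega
    rw [hP, one_mul]
    have hPne : (∏ i : Fin N, (ξ i - 1) ^ (N - 1)) ≠ 0 :=
      Finset.prod_ne_zero_iff.2 fun i _ => pow_ne_zero _ (sub_ne_zero_of_ne (hne i))
    have hprodinv : (∏ i : Fin N, (1 / (ξ i - 1) ^ (N - 1)))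
        = 1 / ∏ i : Fin N, (ξ i - 1) ^ (N - 1) := by
      rw [Finset.prod_div_distrib, Finset.prod_const_one]
    rw [hprodinv]
    field_simp
  · -- non-injective case
    simp only [Function.Injective, not_forall] at hinj
    obtain ⟨i, j, hxij, hij⟩ := hinj
    have hswap : ξ ∘ (Equiv.swap i j) = ξ := by
      funext m
      rcases eq_or_ne m i with rfl | hmi
      · simp [Equiv.swap_apply_left, hxij]
      rcases eq_or_ne m j with rfl | hmj
      · simp [Equiv.swap_apply_right, hxij]
      · simp [Equiv.swap_apply_of_ne_of_ne hmi hmj]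
    set S := ∑ σ : Equiv.Perm (Fin N), ((Equiv.Perm.sign σ : ℤ) : ℂ) * Fg 1 (ξ ∘ σ) with hS
    have hneg : S = -S := by
      rw [hS]
      calc ∑ σ : Equiv.Perm (Fin N), ((Equiv.Perm.sign σ : ℤ):ℂ) * Fg 1 (ξ ∘ σ)
          = ∑ σ : Equiv.Perm (Fin N),
              ((Equiv.Perm.sign ((Equiv.mulLeft (Equiv.swap i j)) σ) : ℤ):ℂ) *
                Fg 1 (ξ ∘ ((Equiv.mulLeft (Equiv.swap i j)) σ)) :=
            (Equiv.sum_comp (Equiv.mulLeft (Equiv.swap i j))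
              (fun σ : Equiv.Perm (Fin N) => ((Equiv.Perm.sign σ : ℤ):ℂ) * Fg 1 (ξ ∘ σ))).symm
        _ = ∑ σ : Equiv.Perm (Fin N), -(((Equiv.Perm.sign σ : ℤ):ℂ) * Fg 1 (ξ ∘ σ)) := by
            refine Finset.sum_congr rfl fun σ _ => ?_
            have hc : ξ ∘ ⇑((Equiv.mulLeft (Equiv.swap i j)) σ) = ξ ∘ ⇑σ := by
              funext m
              simp only [Equiv.coe_mulLeft, Equiv.Perm.mul_apply, Function.comp_apply]
              exact congrFun hswap (σ m)
            have hsign : Equiv.Perm.sign ((Equiv.mulLeft (Equiv.swap i j)) σ)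
                = - Equiv.Perm.sign σ := by
              simp [Equiv.Perm.sign_mul, Equiv.Perm.sign_swap hij]
            rw [hc, hsign]
            push_cast
            ring
        _ = -∑ σ : Equiv.Perm (Fin N), ((Equiv.Perm.sign σ : ℤ):ℂ) * Fg 1 (ξ ∘ σ) :=
            Finset.sum_neg_distrib _
    have hS0 : S = 0 := by
      have h2 : (2:ℂ) * S = 0 := by linear_combination hneg
      rcases mul_eq_zero.1 h2 with h | h
      · exact absurd h two_ne_zero
      · exact h
    rw [hS0]
    have hVd0 : Vd ξ = 0 := Vd_eq_zero (by
      simp only [Function.Injective, not_forall]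
      exact ⟨i, j, hxij, hij⟩)
    rw [hVd0, mul_zero]

end
end

section
/- Let ξ_1,...,ξ_N be complex numbers ≠ 1, and for a permutation σ ∈ S_N define A_σ = T_{a_n} ⋯ T_{a_1} where σ = T_{a_n} ⋯ T_{a_1} is any word in the adjacent transpositions T_i, and T_i carries the appropriate spectral parameters determined by the word. Then the (2^{N-1}+1, 2^{N-1}+1) entry of A_σ equals sgn(σ) · ∏_{i=0}^{N-2} ((1-ξ_{2+i})/(1-ξ_{σ(2+i)}))^i, for N ≥ 2. -/
noncomputable def Smat (a b : ℂ) : Matrix (Fin 4) (Fin 4) ℂ :=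
  !![-((1 - b) / (1 - a)), 0, 0, 0;
     0, -((1 - b) / (1 - a)), (b - a) / (1 - a), 0;
     0, 0, -1, 0;
     0, 0, 0, -((1 - b) / (1 - a))]

noncomputable def Tmat (N l : ℕ) (M : Matrix (Fin 4) (Fin 4) ℂ) :
    Matrix (Fin (2 ^ N)) (Fin (2 ^ N)) ℂ := fun x y =>
  if x.val / 2 ^ (N - l + 1) = y.val / 2 ^ (N - l + 1) ∧
      x.val % 2 ^ (N - l - 1) = y.val % 2 ^ (N - l - 1) then
    M ⟨x.val / 2 ^ (N - l - 1) % 4, Nat.mod_lt _ (by norm_num)⟩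
      ⟨y.val / 2 ^ (N - l - 1) % 4, Nat.mod_lt _ (by norm_num)⟩
  else 0

/-- Given a word `w = [a_n, …, a_1]` in the adjacent transpositions
(the rightmost letter applied first), `Amat N ξ w` returns the pair
`(σ, A_σ)`, where `σ = T_{a_n} ⋯ T_{a_1}` and `A_σ = 𝐓_{a_n} ⋯ 𝐓_{a_1}`,
each factor `𝐓_i` carrying the spectral parameters `α = ξ_{σ'(i)}`,
`β = ξ_{σ'(i+1)}` determined by the partial permutation `σ'` built so far. -/
noncomputable def Amat (N : ℕ) (ξ : Fin N → ℂ) :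
    List (Fin (N - 1)) → Equiv.Perm (Fin N) × Matrix (Fin (2 ^ N)) (Fin (2 ^ N)) ℂ
  | [] => (1, 1)
  | k :: rest =>
    let p := Amat N ξ rest
    (p.1 * Equiv.swap ⟨k.val, by have := k.isLt; omega⟩ ⟨k.val + 1, by have := k.isLt; omega⟩,
     Tmat N (k.val + 1)
        (Smat (ξ (p.1 ⟨k.val, by have := k.isLt; omega⟩))
          (ξ (p.1 ⟨k.val + 1, by have := k.isLt; omega⟩))) * p.2)

open Finset

lemma smat_lower (a b : ℂ) (i j : Fin 4) (h : (j:ℕ) < (i:ℕ)) : Smat a b i j = 0 := by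
  fin_cases i <;> fin_cases j <;> first | rfl | simp at h

lemma smat_diag0 (a b : ℂ) (h : (0:ℕ) < 4) :
    Smat a b ⟨0, h⟩ ⟨0, h⟩ = -((1 - b) / (1 - a)) := rfl

lemma smat_diag2 (a b : ℂ) (h : (2:ℕ) < 4) :
    Smat a b ⟨2, h⟩ ⟨2, h⟩ = -1 := rfl

lemma tmat_lower (N l : ℕ) (hlN : l ≤ N - 1) (hN : 2 ≤ N)
    (M : Matrix (Fin 4) (Fin 4) ℂ) (hM : ∀ i j : Fin 4, (j:ℕ) < (i:ℕ) → M i j = 0)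
    (x y : Fin (2^N)) (h : y.val < x.val) : Tmat N l M x y = 0 := by
  simp only [Tmat]
  split_ifs with h12
  · obtain ⟨h1, h2⟩ := h12
    set m : ℕ := 2^(N-l-1) with hm
    have h4 : (2:ℕ)^(N-l+1) = 4*m := by
      have hE : N - l + 1 = (N - l - 1) + 2 := by omega
      rw [hE, pow_add, hm]; ring
    rw [h4] at h1
    have ex : x.val = x.val/(4*m)*(4*m) + x.val/m%4*m + x.val%m := by
      have h5 : x.val / m / 4 = x.val/(4*m) := by
        rw [Nat.div_div_eq_div_mul, Nat.mul_comm]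
      calc x.val = x.val/m * m + x.val % m := (Nat.div_add_mod' _ _).symm
        _ = (x.val/m/4*4 + x.val/m%4) * m + x.val % m := by
              rw [Nat.div_add_mod' (x.val/m) 4]
        _ = x.val/(4*m)*(4*m) + x.val/m%4*m + x.val%m := by rw [← h5]; ring
    have ey : y.val = y.val/(4*m)*(4*m) + y.val/m%4*m + y.val%m := by
      have h5 : y.val / m / 4 = y.val/(4*m) := by
        rw [Nat.div_div_eq_div_mul, Nat.mul_comm]
      calc y.val = y.val/m * m + y.val % m := (Nat.div_add_mod' _ _).symm
        _ = (y.val/m/4*4 + y.val/m%4) * m + y.val % m := by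
              rw [Nat.div_add_mod' (y.val/m) 4]
        _ = y.val/(4*m)*(4*m) + y.val/m%4*m + y.val%m := by rw [← h5]; ring
    rw [← h1] at ey
    rw [ex] at h
    rw [ey] at h
    rw [add_assoc, add_assoc] at h
    have h7 := lt_of_add_lt_add_left h
    rw [h2] at h7
    have h8 := lt_of_add_lt_add_right h7
    exact hM _ _ (lt_of_mul_lt_mul_right h8 (Nat.zero_le m))
  · rfl

lemma tmat_diag (N l : ℕ) (M : Matrix (Fin 4) (Fin 4) ℂ) (x : Fin (2^N)) :
    Tmat N l M x x =
      M ⟨x.val / 2 ^ (N - l - 1) % 4, Nat.mod_lt _ (by norm_num)⟩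
        ⟨x.val / 2 ^ (N - l - 1) % 4, Nat.mod_lt _ (by norm_num)⟩ := by
  simp [Tmat]

lemma pow_div_pow_mod (N l : ℕ) (hlN : l ≤ N - 1) (hN : 2 ≤ N) :
    2^(N-1) / 2^(N-l-1) % 4 = 2^l % 4 := by
  rw [Nat.pow_div (by omega) (by norm_num)]
  have : N - 1 - (N - l - 1) = l := by omega
  rw [this]

lemma prod_pow_swap {n : ℕ} (f : Fin n → ℂ) (e : Fin n → ℕ) (a b : Fin n)
    (hab : a ≠ b) (heb : e b = e a + 1) :
    (∏ j, f (Equiv.swap a b j) ^ e j) * f b = (∏ j, f j ^ e j) * f a := by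
  have hmem : b ∈ univ.erase a := mem_erase.mpr ⟨hab.symm, mem_univ b⟩
  have h1 : ∀ (g : Fin n → ℂ), ∏ j, g j = g a * (g b * ∏ j ∈ (univ.erase a).erase b, g j) := by
    intro g
    rw [Finset.mul_prod_erase _ _ hmem, Finset.mul_prod_erase _ _ (mem_univ a)]
  rw [h1 (fun j => f (Equiv.swap a b j) ^ e j), h1 (fun j => f j ^ e j)]
  have hrest : ∏ j ∈ (univ.erase a).erase b, f (Equiv.swap a b j) ^ e j
      = ∏ j ∈ (univ.erase a).erase b, f j ^ e j := by
    refine Finset.prod_congr rfl fun j hj => ?_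
    simp only [mem_erase] at hj
    rw [Equiv.swap_apply_of_ne_of_ne hj.2.1 hj.1]
  simp only [hrest, Equiv.swap_apply_left, Equiv.swap_apply_right, heb]
  ring

lemma amat_upper (N : ℕ) (hN : 2 ≤ N) (ξ : Fin N → ℂ) (w : List (Fin (N-1))) :
    ∀ x y : Fin (2^N), y.val < x.val → (Amat N ξ w).2 x y = 0 := by
  induction w with
  | nil =>
    intro x y h
    exact Matrix.one_apply_ne (fun e => by rw [e] at h; exact lt_irrefl _ h)
  | cons k rest ih =>
    intro x y h
    simp only [Amat]
    rw [Matrix.mul_apply]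
    refine Finset.sum_eq_zero fun z _ => ?_
    rcases lt_or_ge z.val x.val with hz | hz
    · rw [tmat_lower N (k.val+1) (by have := k.isLt; omega) hN _
        (fun i j hij => smat_lower _ _ i j hij) x z hz, zero_mul]
    · rw [ih z y (lt_of_lt_of_le h hz), mul_zero]

theorem stmt14 (N : ℕ) (hN : 2 ≤ N) (ξ : Fin N → ℂ) (hξ : ∀ i, ξ i ≠ 1)
    (w : List (Fin (N - 1))) :
    (Amat N ξ w).2
        ⟨2 ^ (N - 1), Nat.pow_lt_pow_right one_lt_two (by omega)⟩
        ⟨2 ^ (N - 1), Nat.pow_lt_pow_right one_lt_two (by omega)⟩ =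
      ((Equiv.Perm.sign (Amat N ξ w).1 : ℤ) : ℂ) *
        ∏ j : Fin N, ((1 - ξ j) / (1 - ξ ((Amat N ξ w).1 j))) ^ (j.val - 1) := by
  have hne : ∀ i, (1 : ℂ) - ξ i ≠ 0 := fun i => sub_ne_zero.mpr (hξ i).symm
  set x₀ : Fin (2^N) := ⟨2 ^ (N - 1), Nat.pow_lt_pow_right one_lt_two (by omega)⟩ with hx₀
  induction w with
  | nil =>
    simp only [Amat, Matrix.one_apply_eq, Equiv.Perm.sign_one, Units.val_one,
      Int.cast_one, Equiv.Perm.one_apply, one_mul]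
    rw [Finset.prod_eq_one fun j _ => by rw [div_self (hne j), one_pow]]
  | cons k rest ih =>
    simp only [Amat]
    set σ := (Amat N ξ rest).1 with hσ
    set P := (Amat N ξ rest).2 with hP
    set a : Fin N := ⟨k.val, by have := k.isLt; omega⟩ with ha
    set b : Fin N := ⟨k.val + 1, by have := k.isLt; omega⟩ with hb
    have hab : a ≠ b := by
      intro h; apply congrArg Fin.val at h; simp [ha, hb] at h
    -- diagonal entry of the product
    have hdiagmul : (Tmat N (k.val + 1) (Smat (ξ (σ a)) (ξ (σ b))) * P) x₀ x₀ =
        Tmat N (k.val + 1) (Smat (ξ (σ a)) (ξ (σ b))) x₀ x₀ * P x₀ x₀ := by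
      rw [Matrix.mul_apply]
      refine Finset.sum_eq_single x₀ (fun z _ hz => ?_) (fun h => absurd (mem_univ x₀) h)
      rcases lt_or_gt_of_ne (fun hv => hz (Fin.ext hv) : z.val ≠ x₀.val) with hlt | hgt
      · rw [tmat_lower N (k.val+1) (by have := k.isLt; omega) hN _
          (fun i j hij => smat_lower _ _ i j hij) x₀ z hlt, zero_mul]
      · rw [hP, amat_upper N hN ξ rest z x₀ hgt, mul_zero]
    rw [hdiagmul, ih]
    -- the index of the diagonal Smat entry
    have hidx : x₀.val / 2 ^ (N - (k.val+1) - 1) % 4 = 2 ^ (k.val + 1) % 4 :=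
      pow_div_pow_mod N (k.val+1) (by have := k.isLt; omega) hN
    have hsgn : ((Equiv.Perm.sign (σ * Equiv.swap a b) : ℤ) : ℂ)
        = -((Equiv.Perm.sign σ : ℤ) : ℂ) := by
      rw [map_mul, Equiv.Perm.sign_swap hab]
      push_cast
      ring
    rw [hsgn]
    by_cases hk : k.val = 0
    · -- l = 1 : diagonal entry is -1
      have hv : x₀.val / 2 ^ (N - (k.val+1) - 1) % 4 = 2 := by
        rw [hidx, hk]
        norm_num
      have hT : Tmat N (k.val + 1) (Smat (ξ (σ a)) (ξ (σ b))) x₀ x₀ = -1 := by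
        rw [tmat_diag]
        have : (⟨x₀.val / 2 ^ (N - (k.val+1) - 1) % 4, Nat.mod_lt _ (by norm_num)⟩ : Fin 4)
            = ⟨2, by norm_num⟩ := Fin.ext hv
        rw [this, smat_diag2]
      rw [hT]
      have hF : ∏ j, ((1 - ξ j) / (1 - ξ ((σ * Equiv.swap a b) j))) ^ (j.val - 1)
          = ∏ j, ((1 - ξ j) / (1 - ξ (σ j))) ^ (j.val - 1) := by
        refine Finset.prod_congr rfl fun j _ => ?_
        by_cases hja : j = a
        · subst hja; have : (a : Fin N).val - 1 = 0 := by simp [ha, hk]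
          rw [this, pow_zero, pow_zero]
        · by_cases hjb : j = b
          · subst hjb; have : (b : Fin N).val - 1 = 0 := by simp [hb, hk]
            rw [this, pow_zero, pow_zero]
          · rw [Equiv.Perm.mul_apply, Equiv.swap_apply_of_ne_of_ne hja hjb]
      rw [hF]
      ring
    · -- l ≥ 2 : diagonal entry is -(1-β)/(1-α)
      have hv : x₀.val / 2 ^ (N - (k.val+1) - 1) % 4 = 0 := by
        rw [hidx]
        have h2 : k.val + 1 = (k.val - 1) + 2 := by omega
        rw [h2, pow_add]
        exact Nat.mul_mod_left _ _
      have hT : Tmat N (k.val + 1) (Smat (ξ (σ a)) (ξ (σ b))) x₀ x₀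
          = -((1 - ξ (σ b)) / (1 - ξ (σ a))) := by
        rw [tmat_diag]
        have : (⟨x₀.val / 2 ^ (N - (k.val+1) - 1) % 4, Nat.mod_lt _ (by norm_num)⟩ : Fin 4)
            = ⟨0, by norm_num⟩ := Fin.ext hv
        rw [this, smat_diag0]
      rw [hT]
      -- split numerator and denominator
      have hsplit : ∀ τ : Equiv.Perm (Fin N),
          ∏ j, ((1 - ξ j) / (1 - ξ (τ j))) ^ (j.val - 1)
            = (∏ j, (1 - ξ j) ^ (j.val - 1)) / ∏ j, (1 - ξ (τ j)) ^ (j.val - 1) := by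
        intro τ
        rw [← Finset.prod_div_distrib]
        exact Finset.prod_congr rfl fun j _ => div_pow _ _ _
      rw [hsplit σ, hsplit (σ * Equiv.swap a b)]
      have heb : (b : Fin N).val - 1 = ((a : Fin N).val - 1) + 1 := by
        simp only [ha, hb]; omega
      have key : (∏ j, (1 - ξ (σ (Equiv.swap a b j))) ^ (j.val - 1)) * (1 - ξ (σ b))
          = (∏ j, (1 - ξ (σ j)) ^ (j.val - 1)) * (1 - ξ (σ a)) :=
        prod_pow_swap (fun t => 1 - ξ (σ t)) (fun j => j.val - 1) a b hab heb
      have hGs : ∏ j, (1 - ξ ((σ * Equiv.swap a b) j)) ^ (j.val - 1)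
          = ∏ j, (1 - ξ (σ (Equiv.swap a b j))) ^ (j.val - 1) := by
        exact Finset.prod_congr rfl fun j _ => by rw [Equiv.Perm.mul_apply]
      rw [hGs]
      have hGσne : (∏ j, (1 - ξ (σ j)) ^ (j.val - 1)) ≠ 0 :=
        Finset.prod_ne_zero_iff.mpr fun j _ => pow_ne_zero _ (hne (σ j))
      have hGsne : (∏ j, (1 - ξ (σ (Equiv.swap a b j))) ^ (j.val - 1)) ≠ 0 :=
        Finset.prod_ne_zero_iff.mpr fun j _ => pow_ne_zero _ (hne (σ (Equiv.swap a b j)))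
      have hfa := hne (σ a)
      have hfb := hne (σ b)
      field_simp
      linear_combination (-(∏ j, (1 - ξ j) ^ (j.val - 1))) * key
end
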